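/- arXiv:2108.00740 — 4 statements merged into one kernel-verified Lean document; each statement's English description precedes it below -/
import Mathlib

section
/- Let A_1, ..., A_m be positive definite real symmetric n×n matrices and set W = (Σ_{i=1}^m tr(A_i) A_i)^{1/2}. Then for every real symmetric n×n matrix Y one has Σ_{i=1}^m tr(A_i Y)^2 ≤ tr(Y W Y W). (This is the identity-element case b_k = e of Theorem 1, specialized to the positive semidefinite cone.) -/
open Matrix BigOperators

/- `msqrt A` is the positive semidefinite square root of `A` (junk value `0` when `A` is
not positive semidefinite). -/
open Classical in
noncomputable def msqrt {n : ℕ} (A : Matrix (Fin n) (Fin n) ℝ) : Matrix (Fin n) (Fin n) ℝ :=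
  if h : A.PosSemidef then
    (h.1.eigenvectorUnitary : Matrix (Fin n) (Fin n) ℝ) *
      diagonal (Real.sqrt ∘ h.1.eigenvalues) *
      (star h.1.eigenvectorUnitary : Matrix (Fin n) (Fin n) ℝ)
  else 0

/- The matrix geometric mean `X # Y = X^{1/2} (X^{-1/2} Y X^{-1/2})^{1/2} X^{1/2}`. -/
noncomputable def gmean {n : ℕ} (X Y : Matrix (Fin n) (Fin n) ℝ) : Matrix (Fin n) (Fin n) ℝ :=
  msqrt X * msqrt (msqrt X⁻¹ * Y * msqrt X⁻¹) * msqrt X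

set_option linter.unusedSectionVars false
set_option maxHeartbeats 1000000


variable {ι : Type*} [Fintype ι] [DecidableEq ι]

lemma psd_diag_nonneg {M : Matrix ι ι ℝ} (hM : M.PosSemidef) (i : ι) : 0 ≤ M i i := by
  have := hM.dotProduct_mulVec_nonneg (Pi.single i 1)
  simpa [Matrix.mulVec_single_one, dotProduct, Pi.single_apply, star_trivial] using this

lemma psd_trace_nonneg {M : Matrix ι ι ℝ} (hM : M.PosSemidef) : 0 ≤ M.trace :=
  Finset.sum_nonneg fun i _ => psd_diag_nonneg hM i

lemma psd_sqrt_aux {M : Matrix ι ι ℝ} (h : M.PosSemidef) :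
    ((h.1.eigenvectorUnitary : Matrix ι ι ℝ) * diagonal (Real.sqrt ∘ h.1.eigenvalues) *
      (star h.1.eigenvectorUnitary : Matrix ι ι ℝ)).PosSemidef ∧
    (h.1.eigenvectorUnitary : Matrix ι ι ℝ) * diagonal (Real.sqrt ∘ h.1.eigenvalues) *
      (star h.1.eigenvectorUnitary : Matrix ι ι ℝ) *
    ((h.1.eigenvectorUnitary : Matrix ι ι ℝ) * diagonal (Real.sqrt ∘ h.1.eigenvalues) *
      (star h.1.eigenvectorUnitary : Matrix ι ι ℝ)) = M := by
  have hU' : (star h.1.eigenvectorUnitary : Matrix ι ι ℝ) *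
      (h.1.eigenvectorUnitary : Matrix ι ι ℝ) = 1 := Unitary.coe_star_mul_self _
  have h2 : M = (h.1.eigenvectorUnitary : Matrix ι ι ℝ) * diagonal h.1.eigenvalues *
      (star h.1.eigenvectorUnitary : Matrix ι ι ℝ) := by
    have := h.1.spectral_theorem
    rwa [Unitary.conjStarAlgAut_apply, RCLike.ofReal_real_eq_id, Function.id_comp] at this
  have hd : (diagonal (Real.sqrt ∘ h.1.eigenvalues)).PosSemidef :=
    Matrix.PosSemidef.diagonal (by intro i; exact Real.sqrt_nonneg _)
  refine ⟨?_, ?_⟩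
  · have := hd.mul_mul_conjTranspose_same (h.1.eigenvectorUnitary : Matrix ι ι ℝ)
    rwa [← Matrix.star_eq_conjTranspose] at this
  · have hDD : diagonal (Real.sqrt ∘ h.1.eigenvalues) * diagonal (Real.sqrt ∘ h.1.eigenvalues)
        = diagonal h.1.eigenvalues := by
      rw [diagonal_mul_diagonal]; congr 1; funext i
      exact Real.mul_self_sqrt (h.eigenvalues_nonneg i)
    conv_rhs => rw [h2]
    rw [← hDD]
    calc _ = (h.1.eigenvectorUnitary : Matrix ι ι ℝ) * diagonal (Real.sqrt ∘ h.1.eigenvalues) *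
          ((star h.1.eigenvectorUnitary : Matrix ι ι ℝ) * (h.1.eigenvectorUnitary : Matrix ι ι ℝ)) *
          diagonal (Real.sqrt ∘ h.1.eigenvalues) * (star h.1.eigenvectorUnitary : Matrix ι ι ℝ) := by
          simp only [Matrix.mul_assoc]
      _ = _ := by rw [hU', Matrix.mul_one, Matrix.mul_assoc _ (diagonal _) (diagonal _)]

lemma psd_trace_mul_nonneg {P Q : Matrix ι ι ℝ} (hP : P.PosSemidef) (hQ : Q.PosSemidef) :
    0 ≤ (P * Q).trace := by
  obtain ⟨B, hB⟩ : ∃ B : Matrix ι ι ℝ, P = Bᴴ * B := by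
    obtain ⟨h1, h2⟩ := psd_sqrt_aux hP
    exact ⟨_, h2.symm.trans (congrArg (· * _) h1.1.eq.symm)⟩
  have h : (P * Q).trace = (B * Q * Bᴴ).trace := by
    rw [hB, Matrix.mul_assoc, Matrix.trace_mul_comm]
  rw [h]
  exact psd_trace_nonneg (hQ.mul_mul_conjTranspose_same B)

lemma herm_smul {M : Matrix ι ι ℝ} (hM : M.IsHermitian) (c : ℝ) : (c • M).IsHermitian := by
  unfold Matrix.IsHermitian
  rw [Matrix.conjTranspose_smul, star_trivial, hM.eq]

lemma psd_smul {M : Matrix ι ι ℝ} (hM : M.PosSemidef) {c : ℝ} (hc : 0 ≤ c) :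
    (c • M).PosSemidef := by
  refine Matrix.PosSemidef.of_dotProduct_mulVec_nonneg (herm_smul hM.1 c) fun x => ?_
  have := hM.dotProduct_mulVec_nonneg x
  rw [Matrix.smul_mulVec, dotProduct_smul]
  exact mul_nonneg hc this

lemma psd_sum {κ : Type*} {s : Finset κ} {f : κ → Matrix ι ι ℝ}
    (hf : ∀ i ∈ s, (f i).PosSemidef) : (∑ i ∈ s, f i).PosSemidef :=
  Finset.sum_induction f _ (fun _ _ ha hb => ha.add hb) Matrix.PosSemidef.zero hf

lemma pd_trace_pos [Nonempty ι] {M : Matrix ι ι ℝ} (hM : M.PosDef) : 0 < M.trace := by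
  have h : ∀ i, 0 < M i i := by
    intro i
    have := hM.dotProduct_mulVec_pos (x := Pi.single i (1 : ℝ)) (by simp)
    simpa [Matrix.mulVec_single_one, dotProduct, Pi.single_apply, star_trivial] using this
  exact Finset.sum_pos (fun i _ => h i) Finset.univ_nonempty

lemma pd_of_psd_isUnit {M : Matrix ι ι ℝ} (hM : M.PosSemidef) (hdet : IsUnit M) : M.PosDef := by
  refine Matrix.PosDef.of_dotProduct_mulVec_pos hM.1 fun x hx => ?_
  rcases lt_or_eq_of_le (hM.dotProduct_mulVec_nonneg x) with h | h
  · exact h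
  · exfalso
    have h0 : M *ᵥ x = 0 := (hM.dotProduct_mulVec_zero_iff x).mp h.symm
    apply hx
    have : M⁻¹ *ᵥ (M *ᵥ x) = x := by
      rw [Matrix.mulVec_mulVec, Matrix.nonsing_inv_mul _ (Matrix.isUnit_iff_isUnit_det _ |>.mp hdet), Matrix.one_mulVec]
    rw [h0, Matrix.mulVec_zero] at this
    exact this.symm
variable {ι : Type*} [Fintype ι] [DecidableEq ι]

lemma herm_sub_psd {K : Matrix ι ι ℝ} (hK : K.IsHermitian) (α : ℝ)
    (h : ∀ i, hK.eigenvalues i ≤ α) : (α • (1 : Matrix ι ι ℝ) - K).PosSemidef := by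
  set U := (hK.eigenvectorUnitary : Matrix ι ι ℝ) with hUdef
  have hU : U * star U = 1 := Unitary.mul_star_self_of_mem (hK.eigenvectorUnitary).2
  have h1 : α • (1 : Matrix ι ι ℝ) = U * (Matrix.diagonal (fun _ => α)) * star U := by
    have hd : Matrix.diagonal (fun _ : ι => α) = α • (1 : Matrix ι ι ℝ) := by
      ext i j
      by_cases hij : i = j <;> simp [Matrix.diagonal, Matrix.one_apply, hij]
    rw [hd, Matrix.mul_smul, Matrix.smul_mul, Matrix.mul_one, hU]
  have h2 : K = U * (Matrix.diagonal hK.eigenvalues) * star U := by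
    have := hK.spectral_theorem
    rwa [Unitary.conjStarAlgAut_apply, RCLike.ofReal_real_eq_id, Function.id_comp] at this
  have h3 : α • (1 : Matrix ι ι ℝ) - K
      = U * (Matrix.diagonal (fun i => α - hK.eigenvalues i)) * star U := by
    rw [h1]
    conv_lhs => rw [h2]
    rw [← Matrix.sub_mul, ← Matrix.mul_sub, Matrix.diagonal_sub]
  rw [h3]
  have hd : (Matrix.diagonal (fun i => α - hK.eigenvalues i)).PosSemidef :=
    Matrix.PosSemidef.diagonal (fun i => sub_nonneg.mpr (h i))
  simpa [Matrix.star_eq_conjTranspose] using hd.mul_mul_conjTranspose_same U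

lemma herm_add_psd {K : Matrix ι ι ℝ} (hK : K.IsHermitian) (α : ℝ)
    (h : ∀ i, -α ≤ hK.eigenvalues i) : (α • (1 : Matrix ι ι ℝ) + K).PosSemidef := by
  set U := (hK.eigenvectorUnitary : Matrix ι ι ℝ) with hUdef
  have hU : U * star U = 1 := Unitary.mul_star_self_of_mem (hK.eigenvectorUnitary).2
  have h1 : α • (1 : Matrix ι ι ℝ) = U * (Matrix.diagonal (fun _ => α)) * star U := by
    have hd : Matrix.diagonal (fun _ : ι => α) = α • (1 : Matrix ι ι ℝ) := by
      ext i j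
      by_cases hij : i = j <;> simp [Matrix.diagonal, Matrix.one_apply, hij]
    rw [hd, Matrix.mul_smul, Matrix.smul_mul, Matrix.mul_one, hU]
  have h2 : K = U * (Matrix.diagonal hK.eigenvalues) * star U := by
    have := hK.spectral_theorem
    rwa [Unitary.conjStarAlgAut_apply, RCLike.ofReal_real_eq_id, Function.id_comp] at this
  have h3 : α • (1 : Matrix ι ι ℝ) + K
      = U * (Matrix.diagonal (fun i => α + hK.eigenvalues i)) * star U := by
    rw [h1]
    conv_lhs => rw [h2]
    rw [← Matrix.add_mul, ← Matrix.mul_add, Matrix.diagonal_add]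
  rw [h3]
  have hd : (Matrix.diagonal (fun i => α + hK.eigenvalues i)).PosSemidef :=
    Matrix.PosSemidef.diagonal (by intro i; simp only [Pi.zero_apply]; linarith [h i])
  simpa [Matrix.star_eq_conjTranspose] using hd.mul_mul_conjTranspose_same U

lemma herm_eq_zero_of_eigenvalues_zero {K : Matrix ι ι ℝ} (hK : K.IsHermitian)
    (h : ∀ i, hK.eigenvalues i = 0) : K = 0 := by
  have h2 := hK.spectral_theorem
  rw [Unitary.conjStarAlgAut_apply, RCLike.ofReal_real_eq_id, Function.id_comp] at h2
  have : Matrix.diagonal hK.eigenvalues = 0 := by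
    ext i j; by_cases hij : i = j <;> simp [Matrix.diagonal, hij, h]
  rw [h2, this, Matrix.mul_zero, Matrix.zero_mul]

lemma dot_self_pos {v : ι → ℝ} (hv : v ≠ 0) : 0 < v ⬝ᵥ v := by
  have h1 : 0 ≤ v ⬝ᵥ v := Finset.sum_nonneg fun i _ => mul_self_nonneg (v i)
  rcases lt_or_eq_of_le h1 with h | h
  · exact h
  · exact absurd ((dotProduct_self_eq_zero).mp h.symm) hv

lemma herm_norm_eigen [Nonempty ι] {y : Matrix ι ι ℝ} (hy : y.IsHermitian) (hy0 : y ≠ 0) :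
    ∃ (α μ : ℝ) (v : ι → ℝ), 0 < α ∧ |μ| = α ∧ v ≠ 0 ∧ y *ᵥ v = μ • v ∧
      (α • (1 : Matrix ι ι ℝ) - y).PosSemidef ∧ (α • (1 : Matrix ι ι ℝ) + y).PosSemidef := by
  obtain ⟨j, -, hj⟩ := Finset.exists_max_image (Finset.univ : Finset ι)
    (fun i => |hy.eigenvalues i|) ⟨Classical.arbitrary ι, Finset.mem_univ _⟩
  set α := |hy.eigenvalues j| with hα
  have hmax : ∀ i, |hy.eigenvalues i| ≤ α := fun i => hj i (Finset.mem_univ i)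
  have hαpos : 0 < α := by
    rcases lt_or_eq_of_le (abs_nonneg (hy.eigenvalues j)) with h | h
    · exact h
    · exfalso
      apply hy0
      apply herm_eq_zero_of_eigenvalues_zero hy
      intro i
      have h2 := hmax i
      have : |hy.eigenvalues i| ≤ 0 := by rw [hα] at h2; linarith [h2]
      exact abs_eq_zero.mp (le_antisymm this (abs_nonneg _))
  refine ⟨α, hy.eigenvalues j, ⇑(hy.eigenvectorBasis j), hαpos, rfl, ?_, ?_, ?_, ?_⟩
  · intro h0
    apply hy.eigenvectorBasis.orthonormal.ne_zero j
    ext i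
    exact congrFun h0 i
  · exact hy.mulVec_eigenvectorBasis j
  · exact herm_sub_psd hy α fun i => le_trans (le_abs_self _) (hmax i)
  · exact herm_add_psd hy α fun i => neg_le.mp (by linarith [le_trans (neg_le_abs (hy.eigenvalues i)) (hmax i)])

lemma sum_mulVec' {κ : Type*} (s : Finset κ) (f : κ → Matrix ι ι ℝ) (x : ι → ℝ) :
    (∑ i ∈ s, f i) *ᵥ x = ∑ i ∈ s, (f i) *ᵥ x := by
  ext a
  simp only [Matrix.mulVec, dotProduct, Matrix.sum_apply, Finset.sum_apply, Finset.sum_mul]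
  exact Finset.sum_comm

lemma dotProduct_sum' {κ : Type*} (s : Finset κ) (v : ι → ℝ) (w : κ → ι → ℝ) :
    v ⬝ᵥ (∑ i ∈ s, w i) = ∑ i ∈ s, v ⬝ᵥ (w i) := by
  simp only [dotProduct, Finset.sum_apply, Finset.mul_sum]
  exact Finset.sum_comm


lemma msqrt_eq {n : ℕ} {A : Matrix (Fin n) (Fin n) ℝ} (hA : A.PosSemidef) :
    msqrt A = (hA.1.eigenvectorUnitary : Matrix (Fin n) (Fin n) ℝ) *
      diagonal (Real.sqrt ∘ hA.1.eigenvalues) *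
      (star hA.1.eigenvectorUnitary : Matrix (Fin n) (Fin n) ℝ) := by
  rw [msqrt, dif_pos hA]

lemma msqrt_psd {n : ℕ} {A : Matrix (Fin n) (Fin n) ℝ} (hA : A.PosSemidef) :
    (msqrt A).PosSemidef := by
  rw [msqrt_eq hA]; exact (psd_sqrt_aux hA).1

lemma msqrt_mul_self {n : ℕ} {A : Matrix (Fin n) (Fin n) ℝ} (hA : A.PosSemidef) :
    msqrt A * msqrt A = A := by
  rw [msqrt_eq hA]; exact (psd_sqrt_aux hA).2



lemma msqrt_posDef {n : ℕ} {A : Matrix (Fin n) (Fin n) ℝ} (hA : A.PosDef) :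
    (msqrt A).PosDef := by
  have hpsd := msqrt_psd hA.posSemidef
  apply pd_of_psd_isUnit hpsd
  rw [Matrix.isUnit_iff_isUnit_det]
  have hdet : (msqrt A).det * (msqrt A).det = A.det := by
    rw [← Matrix.det_mul, msqrt_mul_self hA.posSemidef]
  have := hA.det_pos
  refine isUnit_iff_ne_zero.mpr (fun h0 => ?_)
  rw [h0, mul_zero] at hdet
  linarith [hdet ▸ this]


lemma conj_sum_smul {κ : Type*} (s : Finset κ) (P : Matrix ι ι ℝ) (t : κ → ℝ)
    (B : κ → Matrix ι ι ℝ) :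
    ∑ i ∈ s, t i • (P * B i * P) = P * (∑ i ∈ s, t i • B i) * P := by
  rw [Finset.mul_sum, Finset.sum_mul]
  exact Finset.sum_congr rfl fun i _ => by rw [mul_smul_comm, smul_mul_assoc]

lemma entrysum_eq_trace {P Q : Matrix ι ι ℝ} (hQ : Q.IsHermitian) :
    ∑ a, ∑ b, P a b * Q a b = Matrix.trace (P * Q) := by
  have hq : ∀ a b, Q a b = Q b a := fun a b => by
    have := hQ.apply a b; rw [star_trivial] at this; exact this.symm
  unfold Matrix.trace
  simp only [Matrix.diag_apply, Matrix.mul_apply]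
  exact Finset.sum_congr rfl fun a _ => Finset.sum_congr rfl fun b _ => by rw [hq a b]

lemma quad_expand {n m : ℕ} (c : Fin m → Matrix (Fin n) (Fin n) ℝ) (x : Fin n × Fin n → ℝ) :
    x ⬝ᵥ ((Matrix.of fun p q : Fin n × Fin n => ∑ i, c i p.1 p.2 * c i q.1 q.2) *ᵥ x)
      = ∑ i, (∑ p : Fin n × Fin n, c i p.1 p.2 * x p) ^ 2 := by
  have hrhs : ∀ i : Fin m, (∑ p : Fin n × Fin n, c i p.1 p.2 * x p) ^ 2
      = ∑ p : Fin n × Fin n, ∑ q : Fin n × Fin n,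
          x p * ((c i p.1 p.2 * c i q.1 q.2) * x q) := by
    intro i
    rw [pow_two, Finset.sum_mul_sum]
    exact Finset.sum_congr rfl fun p _ => Finset.sum_congr rfl fun q _ => by ring
  simp only [hrhs]
  rw [Finset.sum_comm]
  simp only [dotProduct, Matrix.mulVec, Matrix.of_apply]
  refine Finset.sum_congr rfl fun p _ => ?_
  rw [Finset.sum_comm]
  simp only [dotProduct, Finset.sum_mul, Finset.mul_sum]

lemma herm_sum {κ : Type*} {s : Finset κ} {f : κ → Matrix ι ι ℝ}
    (h : ∀ i ∈ s, (f i).IsHermitian) : (∑ i ∈ s, f i).IsHermitian := by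
  unfold Matrix.IsHermitian
  rw [Matrix.conjTranspose_sum]
  exact Finset.sum_congr rfl h

lemma entrysum_eq_trace' {P Q : Matrix ι ι ℝ} (hQ : Q.IsHermitian) :
    ∑ p : ι × ι, P p.1 p.2 * Q p.1 p.2 = Matrix.trace (P * Q) := by
  rw [Fintype.sum_prod_type]
  exact entrysum_eq_trace hQ


lemma eig_le_one {n m : ℕ} (hn : 0 < n)
    (A : Fin m → Matrix (Fin n) (Fin n) ℝ) (hA : ∀ i, (A i).PosDef)
    (W : Matrix (Fin n) (Fin n) ℝ) (hWd : W.PosDef)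
    (hWW : W * W = ∑ i, (Matrix.trace (A i)) • A i)
    (V : Matrix (Fin n) (Fin n) ℝ) (hVd : V.PosDef) (hVV : V * V = W)
    (c : Fin m → Matrix (Fin n) (Fin n) ℝ) (hc : ∀ i, c i = V⁻¹ * A i * V⁻¹)
    (K : Matrix (Fin n × Fin n) (Fin n × Fin n) ℝ)
    (hK : K = Matrix.of fun p q : Fin n × Fin n => ∑ i, c i p.1 p.2 * c i q.1 q.2)
    (hKh : K.IsHermitian) : ∀ j, hKh.eigenvalues j ≤ 1 := by
  haveI : Nonempty (Fin n) := ⟨⟨0, hn⟩⟩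
  -- basic invertibility facts
  have hVh : V.IsHermitian := hVd.isHermitian
  have hVinvd : (V⁻¹).PosDef := hVd.inv
  have hVinvh : (V⁻¹).IsHermitian := hVinvd.isHermitian
  have hVunit : IsUnit V.det := isUnit_iff_ne_zero.mpr (ne_of_gt hVd.det_pos)
  have hVVinv : V * V⁻¹ = 1 := Matrix.mul_nonsing_inv V hVunit
  have hVinvV : V⁻¹ * V = 1 := Matrix.nonsing_inv_mul V hVunit
  have hWunit : IsUnit W.det := isUnit_iff_ne_zero.mpr (ne_of_gt hWd.det_pos)
  have hWWinv : W * W⁻¹ = 1 := Matrix.mul_nonsing_inv W hWunit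
  have hWinvW : W⁻¹ * W = 1 := Matrix.nonsing_inv_mul W hWunit
  have hWinvh : (W⁻¹).IsHermitian := hWd.inv.isHermitian
  have hWinv : W⁻¹ = V⁻¹ * V⁻¹ := by rw [← hVV, Matrix.mul_inv_rev]
  have hch : ∀ i, (c i).IsHermitian := by
    intro i
    rw [hc i]
    unfold Matrix.IsHermitian
    rw [Matrix.conjTranspose_mul, Matrix.conjTranspose_mul, hVinvh.eq, (hA i).isHermitian.eq,
      Matrix.mul_assoc]
  intro j
  by_contra hcon
  push_neg at hcon
  set lam := hKh.eigenvalues j with hlam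
  have hlam1 : 1 < lam := hcon
  have hlampos : 0 < lam := lt_trans one_pos hlam1
  set u := ⇑(hKh.eigenvectorBasis j) with hu
  have hKu : K *ᵥ u = lam • u := hKh.mulVec_eigenvectorBasis j
  have hu0 : u ≠ 0 := by
    intro h0
    apply hKh.eigenvectorBasis.orthonormal.ne_zero j
    ext i
    exact congrFun h0 i
  set z := (Matrix.of fun a b : Fin n => u (a, b)) with hzdef
  have hz0 : z ≠ 0 := by
    intro h0
    apply hu0
    funext p
    have := congrFun (congrFun h0 p.1) p.2
    simpa [hzdef] using this
  -- eigen equation in matrix form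
  have hzeq : ∑ i, (∑ p : Fin n × Fin n, c i p.1 p.2 * z p.1 p.2) • c i = lam • z := by
    ext a b
    have h1 := congrFun hKu (a, b)
    simp only [Matrix.mulVec, dotProduct, hK, Matrix.of_apply, Pi.smul_apply,
      smul_eq_mul, Prod.fst, Prod.snd] at h1
    simp only [Matrix.sum_apply, Matrix.smul_apply, smul_eq_mul, hzdef, Matrix.of_apply,
      Prod.mk.eta]
    rw [← h1]
    have h2 : ∀ i : Fin m, (∑ p : Fin n × Fin n, c i p.1 p.2 * u p) * c i a b
        = ∑ q : Fin n × Fin n, c i a b * c i q.1 q.2 * u q := by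
      intro i
      rw [Finset.sum_mul]
      exact Finset.sum_congr rfl fun q _ => by ring
    simp only [h2, Finset.sum_mul]
    exact Finset.sum_comm
  have hzh : z.IsHermitian := by
    have h3 : (lam • z)ᴴ = lam • z := by
      rw [← hzeq]
      exact herm_sum fun i _ => herm_smul (hch i) _
    rw [Matrix.conjTranspose_smul, star_trivial] at h3
    exact smul_right_injective _ (ne_of_gt hlampos) h3
  set y := V⁻¹ * z * V⁻¹ with hydef
  have hyh : y.IsHermitian := by
    unfold Matrix.IsHermitian
    rw [hydef, Matrix.conjTranspose_mul, Matrix.conjTranspose_mul, hVinvh.eq, hzh.eq]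
    exact (Matrix.mul_assoc _ _ _).symm
  have hzy : V * y * V = z := by
    rw [hydef]
    calc V * (V⁻¹ * z * V⁻¹) * V = (V * V⁻¹) * z * (V⁻¹ * V) := by noncomm_ring
    _ = z := by rw [hVVinv, hVinvV, Matrix.one_mul, Matrix.mul_one]
  have hy0 : y ≠ 0 := by
    intro h0
    apply hz0
    rw [h0] at hzy
    simpa using hzy.symm
  have hβ : ∀ i, (∑ p : Fin n × Fin n, c i p.1 p.2 * z p.1 p.2) = Matrix.trace (A i * y) := by
    intro i
    rw [entrysum_eq_trace' hzh, hc i, hydef]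
    have h5 : (V⁻¹ * A i * V⁻¹) * z = V⁻¹ * (A i * (V⁻¹ * z)) := by noncomm_ring
    rw [h5, Matrix.trace_mul_comm]
    congr 1
    noncomm_ring
  have hzeq' : ∑ i, (Matrix.trace (A i * y)) • c i = lam • z := by
    rw [← hzeq]
    exact Finset.sum_congr rfl fun i _ => by rw [hβ i]
  have hyeq : ∑ i, (Matrix.trace (A i * y)) • (W⁻¹ * A i * W⁻¹) = lam • y := by
    have h4 : ∀ i : Fin m, W⁻¹ * A i * W⁻¹ = V⁻¹ * c i * V⁻¹ := by
      intro i
      rw [hc i, hWinv]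
      noncomm_ring
    calc ∑ i, (Matrix.trace (A i * y)) • (W⁻¹ * A i * W⁻¹)
        = ∑ i, (Matrix.trace (A i * y)) • (V⁻¹ * c i * V⁻¹) := by simp only [h4]
      _ = V⁻¹ * (∑ i, (Matrix.trace (A i * y)) • c i) * V⁻¹ :=
          conj_sum_smul _ _ _ _
      _ = V⁻¹ * (lam • z) * V⁻¹ := by rw [hzeq']
      _ = lam • y := by
          rw [hydef, Matrix.mul_smul, Matrix.smul_mul]
  obtain ⟨α, μ, v, hα, hμα, hv0, hyv, hpsd_sub, hpsd_add⟩ := herm_norm_eigen hyh hy0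
  have hDi : ∀ i, (W⁻¹ * A i * W⁻¹).PosSemidef := by
    intro i
    have := (hA i).posSemidef.mul_mul_conjTranspose_same W⁻¹
    rwa [hWinvh.eq] at this
  have hS1 : ∑ i, (Matrix.trace (A i)) • (W⁻¹ * A i * W⁻¹) = 1 := by
    rw [conj_sum_smul, ← hWW]
    calc W⁻¹ * (W * W) * W⁻¹ = (W⁻¹ * W) * (W * W⁻¹) := by noncomm_ring
    _ = 1 := by rw [hWinvW, hWWinv, Matrix.one_mul]
  have key : ∀ (x : Matrix (Fin n) (Fin n) ℝ), x.PosSemidef →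
      (∑ i, (Matrix.trace (A i * x)) • (W⁻¹ * A i * W⁻¹)).PosSemidef := fun x hx =>
    psd_sum (fun i _ => psd_smul (hDi i) (psd_trace_mul_nonneg (hA i).posSemidef hx))
  have hminus : (α • (1 : Matrix (Fin n) (Fin n) ℝ) - lam • y).PosSemidef := by
    have h5 := key _ hpsd_sub
    have h6 : ∑ i, (Matrix.trace (A i * (α • (1 : Matrix (Fin n) (Fin n) ℝ) - y))) •
        (W⁻¹ * A i * W⁻¹) = α • (1 : Matrix (Fin n) (Fin n) ℝ) - lam • y := by
      have h7 : ∀ i : Fin m, Matrix.trace (A i * (α • (1 : Matrix (Fin n) (Fin n) ℝ) - y))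
          = α * Matrix.trace (A i) - Matrix.trace (A i * y) := by
        intro i
        rw [Matrix.mul_sub, Matrix.trace_sub, mul_smul_comm, Matrix.mul_one, Matrix.trace_smul,
          smul_eq_mul]
      simp only [h7, sub_smul, mul_smul]
      rw [Finset.sum_sub_distrib, ← Finset.smul_sum, hS1, hyeq]
    rwa [h6] at h5
  have hplus : (α • (1 : Matrix (Fin n) (Fin n) ℝ) + lam • y).PosSemidef := by
    have h5 := key _ hpsd_add
    have h6 : ∑ i, (Matrix.trace (A i * (α • (1 : Matrix (Fin n) (Fin n) ℝ) + y))) •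
        (W⁻¹ * A i * W⁻¹) = α • (1 : Matrix (Fin n) (Fin n) ℝ) + lam • y := by
      have h7 : ∀ i : Fin m, Matrix.trace (A i * (α • (1 : Matrix (Fin n) (Fin n) ℝ) + y))
          = α * Matrix.trace (A i) + Matrix.trace (A i * y) := by
        intro i
        rw [Matrix.mul_add, Matrix.trace_add, mul_smul_comm, Matrix.mul_one, Matrix.trace_smul,
          smul_eq_mul]
      simp only [h7, add_smul, mul_smul]
      rw [Finset.sum_add_distrib, ← Finset.smul_sum, hS1, hyeq]
    rwa [h6] at h5
  have hvv : 0 < v ⬝ᵥ v := dot_self_pos hv0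
  have e1 := hminus.dotProduct_mulVec_nonneg v
  have e2 := hplus.dotProduct_mulVec_nonneg v
  rw [Matrix.sub_mulVec] at e1
  rw [Matrix.add_mulVec] at e2
  simp only [Matrix.smul_mulVec, Matrix.one_mulVec, hyv, dotProduct_sub,
    dotProduct_add, dotProduct_smul, smul_eq_mul, star_trivial] at e1 e2
  rcases abs_cases μ with ⟨h8, _⟩ | ⟨h8, _⟩
  · have hμ : μ = α := by rw [← hμα, h8]
    rw [hμ] at e1
    nlinarith [e1, mul_pos (sub_pos.mpr hlam1) (mul_pos hα hvv)]
  · have hμ : μ = -α := by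
      have := hμα
      rw [h8] at this
      linarith
    rw [hμ] at e2
    nlinarith [e2, mul_pos (sub_pos.mpr hlam1) (mul_pos hα hvv)]


theorem stmt1 {n m : ℕ} (A : Fin m → Matrix (Fin n) (Fin n) ℝ)
    (hA : ∀ i, (A i).PosDef)
    (W : Matrix (Fin n) (Fin n) ℝ)
    (hW : W = msqrt (∑ i, (Matrix.trace (A i)) • A i)) :
    ∀ Y : Matrix (Fin n) (Fin n) ℝ, Y.IsHermitian →
      ∑ i, (Matrix.trace (A i * Y)) ^ 2 ≤ Matrix.trace (Y * W * Y * W) := by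
  intro Y hY
  rcases Nat.eq_zero_or_pos n with hn | hn
  · subst hn
    simp [Matrix.trace, Finset.univ_eq_empty]
  rcases Nat.eq_zero_or_pos m with hm | hm
  · subst hm
    have hW0 : W = 0 := by
      rw [hW]
      have h0 : (∑ i : Fin 0, (Matrix.trace (A i)) • A i) = (0 : Matrix (Fin n) (Fin n) ℝ) := by
        simp
      rw [h0]
      have hp := msqrt_psd (Matrix.PosSemidef.zero : (0 : Matrix (Fin n) (Fin n) ℝ).PosSemidef)
      have hs := msqrt_mul_self (Matrix.PosSemidef.zero : (0 : Matrix (Fin n) (Fin n) ℝ).PosSemidef)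
      exact Matrix.conjTranspose_mul_self_eq_zero.mp (by rw [hp.1.eq]; exact hs)
    rw [hW0]
    simp
  set SA := ∑ i, (Matrix.trace (A i)) • A i with hSA
  haveI : Nonempty (Fin n) := ⟨⟨0, hn⟩⟩
  haveI : Nonempty (Fin m) := ⟨⟨0, hm⟩⟩
  have hSAd : SA.PosDef := by
    refine Matrix.PosDef.of_dotProduct_mulVec_pos ?_ ?_
    · exact herm_sum fun i _ => herm_smul (hA i).isHermitian _
    · intro xx hxx
      rw [hSA, sum_mulVec', dotProduct_sum']
      refine Finset.sum_pos (fun i _ => ?_) Finset.univ_nonempty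
      rw [Matrix.smul_mulVec, dotProduct_smul, smul_eq_mul]
      exact mul_pos (pd_trace_pos (hA i)) ((hA i).dotProduct_mulVec_pos hxx)
  have hWd : W.PosDef := by rw [hW]; exact msqrt_posDef hSAd
  have hWW : W * W = SA := by rw [hW]; exact msqrt_mul_self hSAd.posSemidef
  set V := msqrt W with hV
  have hVd : V.PosDef := msqrt_posDef hWd
  have hVV : V * V = W := msqrt_mul_self hWd.posSemidef
  have hVunit : IsUnit V.det := isUnit_iff_ne_zero.mpr (ne_of_gt hVd.det_pos)
  have hVVinv : V * V⁻¹ = 1 := Matrix.mul_nonsing_inv V hVunit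
  have hVinvV : V⁻¹ * V = 1 := Matrix.nonsing_inv_mul V hVunit
  set c : Fin m → Matrix (Fin n) (Fin n) ℝ := fun i => V⁻¹ * A i * V⁻¹ with hcdef
  set K : Matrix (Fin n × Fin n) (Fin n × Fin n) ℝ :=
    Matrix.of (fun p q : Fin n × Fin n => ∑ i, c i p.1 p.2 * c i q.1 q.2) with hKdef
  have hKh : K.IsHermitian := by
    unfold Matrix.IsHermitian
    ext p q
    simp only [hKdef, Matrix.conjTranspose_apply, Matrix.of_apply, star_trivial]
    exact Finset.sum_congr rfl fun i _ => mul_comm _ _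
  have heig := eig_le_one hn A hA W hWd (by rw [hWW, hSA]) V hVd hVV c (fun i => rfl) K hKdef hKh
  have hpsd1 := herm_sub_psd hKh 1 heig
  set Z := V * Y * V with hZdef
  have hZh : Z.IsHermitian := by
    unfold Matrix.IsHermitian
    rw [hZdef, Matrix.conjTranspose_mul, Matrix.conjTranspose_mul, hVd.isHermitian.eq, hY.eq]
    exact (Matrix.mul_assoc _ _ _).symm
  set x : Fin n × Fin n → ℝ := fun p => Z p.1 p.2 with hxdef
  have e0 := hpsd1.dotProduct_mulVec_nonneg x
  rw [Matrix.sub_mulVec, Matrix.smul_mulVec, Matrix.one_mulVec, dotProduct_sub,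
    dotProduct_smul] at e0
  simp only [star_trivial, one_smul, smul_eq_mul] at e0
  have h1 : x ⬝ᵥ (K *ᵥ x) = ∑ i, (Matrix.trace (A i * Y))^2 := by
    rw [hKdef, quad_expand c x]
    refine Finset.sum_congr rfl fun i _ => ?_
    congr 1
    have hstep : ∑ p : Fin n × Fin n, c i p.1 p.2 * x p
        = ∑ p : Fin n × Fin n, c i p.1 p.2 * Z p.1 p.2 := rfl
    rw [hstep, entrysum_eq_trace' hZh]
    have h3 : c i * Z = V⁻¹ * (A i * ((V⁻¹ * V) * (Y * V))) := by
      rw [hcdef, hZdef]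
      noncomm_ring
    rw [h3, hVinvV, Matrix.one_mul, Matrix.trace_mul_comm]
    have h4 : A i * (Y * V) * V⁻¹ = A i * (Y * (V * V⁻¹)) := by noncomm_ring
    rw [h4, hVVinv, Matrix.mul_one]
  have h2 : x ⬝ᵥ x = Matrix.trace (Y * W * Y * W) := by
    have hstep : x ⬝ᵥ x = ∑ p : Fin n × Fin n, Z p.1 p.2 * Z p.1 p.2 := rfl
    rw [hstep, entrysum_eq_trace' hZh]
    have h3 : Z * Z = V * (Y * (V * V) * Y * V) := by
      rw [hZdef]
      noncomm_ring
    rw [h3, Matrix.trace_mul_comm]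
    have h4 : Y * (V * V) * Y * V * V = Y * (V * V) * Y * (V * V) := by noncomm_ring
    rw [h4, hVV]
  rw [h1, h2] at e0
  linarith
end

section
/- Let a_1, ..., a_m ∈ ℝ^d be vectors with strictly positive entries and let b ∈ ℝ^d have strictly positive entries. Then for every y ∈ ℝ^d one has Σ_{i=1}^m ⟨a_i, y⟩^2 ≤ Σ_{ℓ=1}^d ( (Σ_{i=1}^m ⟨a_i, b⟩ a_i(ℓ)) / b(ℓ) ) y(ℓ)^2. Equivalently, Σ_i a_i a_i^T ⪯ Diag( (A^T A b) ./ b ), where A is the matrix with rows a_i^T and ./ denotes entrywise division. (Theorem 1 specialized to the nonnegative orthant; this is the majorization lemma underlying Lee–Seung multiplicative updates.) -/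
open BigOperators

theorem stmt4 {m d : ℕ} (a : Fin m → Fin d → ℝ) (ha : ∀ i ℓ, 0 < a i ℓ)
    (b : Fin d → ℝ) (hb : ∀ ℓ, 0 < b ℓ) :
    ∀ y : Fin d → ℝ,
      ∑ i, (∑ ℓ, a i ℓ * y ℓ) ^ 2
        ≤ ∑ ℓ, ((∑ i, (∑ k, a i k * b k) * a i ℓ) / b ℓ) * (y ℓ) ^ 2 := by
  intro y
  have key : ∀ i, (∑ ℓ, a i ℓ * y ℓ) ^ 2
      ≤ (∑ k, a i k * b k) * (∑ ℓ, a i ℓ / b ℓ * y ℓ ^ 2) := by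
    intro i
    have h := Finset.sum_mul_sq_le_sq_mul_sq Finset.univ
      (fun ℓ => Real.sqrt (a i ℓ * b ℓ)) (fun ℓ => Real.sqrt (a i ℓ / b ℓ) * y ℓ)
    have e1 : ∀ ℓ : Fin d, Real.sqrt (a i ℓ * b ℓ) * (Real.sqrt (a i ℓ / b ℓ) * y ℓ)
        = a i ℓ * y ℓ := by
      intro ℓ
      rw [← mul_assoc, ← Real.sqrt_mul (mul_pos (ha i ℓ) (hb ℓ)).le]
      have : a i ℓ * b ℓ * (a i ℓ / b ℓ) = (a i ℓ) ^ 2 := by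
        field_simp [(hb ℓ).ne']
      rw [this, Real.sqrt_sq (ha i ℓ).le]
    have e2 : ∀ ℓ : Fin d, Real.sqrt (a i ℓ * b ℓ) ^ 2 = a i ℓ * b ℓ := by
      intro ℓ; exact Real.sq_sqrt (mul_pos (ha i ℓ) (hb ℓ)).le
    have e3 : ∀ ℓ : Fin d, (Real.sqrt (a i ℓ / b ℓ) * y ℓ) ^ 2 = a i ℓ / b ℓ * y ℓ ^ 2 := by
      intro ℓ
      rw [mul_pow, Real.sq_sqrt (div_pos (ha i ℓ) (hb ℓ)).le]
    simpa only [e1, e2, e3] using h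
  calc ∑ i, (∑ ℓ, a i ℓ * y ℓ) ^ 2
      ≤ ∑ i, (∑ k, a i k * b k) * (∑ ℓ, a i ℓ / b ℓ * y ℓ ^ 2) :=
        Finset.sum_le_sum fun i _ => key i
    _ = ∑ ℓ, ((∑ i, (∑ k, a i k * b k) * a i ℓ) / b ℓ) * (y ℓ) ^ 2 := by
        simp only [Finset.mul_sum, Finset.sum_div, Finset.sum_mul, div_eq_mul_inv]
        rw [Finset.sum_comm]
        refine Finset.sum_congr rfl fun i _ => Finset.sum_congr rfl fun ℓ _ => Finset.sum_congr rfl fun _ _ => by ring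
end

section
/- Let A be an m×d real matrix with strictly positive entries, let x ∈ ℝ^m be entrywise nonnegative, and let b ∈ ℝ^d be entrywise positive. Define the multiplicative update b' by b'(ℓ) = b(ℓ) · (A^T x)(ℓ) / (A^T A b)(ℓ) for each ℓ = 1, ..., d. Then ‖A b' − x‖_2 ≤ ‖A b − x‖_2. (Monotonicity of the squared loss under the Lee–Seung multiplicative update; the specialization of the SCMU algorithm to the nonnegative orthant.) -/
open Matrix BigOperators

lemma key_sym {d : ℕ} (N : Fin d → Fin d → ℝ) (hN : ∀ k l, 0 ≤ N k l)
    (hsym : ∀ k l, N k l = N l k) (c : Fin d → ℝ) :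
    ∑ l, ∑ k, N l k * (c l * c k) ≤ ∑ l, ∑ k, N l k * c l ^ 2 := by
  have step : ∑ l, ∑ k, N l k * (c l * c k)
      ≤ ∑ l, ∑ k, N l k * ((c l ^ 2 + c k ^ 2) / 2) := by
    apply Finset.sum_le_sum; intro l _
    apply Finset.sum_le_sum; intro k _
    apply mul_le_mul_of_nonneg_left _ (hN l k)
    nlinarith [sq_nonneg (c l - c k)]
  have swap : ∑ l, ∑ k, N l k * c k ^ 2 = ∑ l, ∑ k, N l k * c l ^ 2 := by
    rw [Finset.sum_comm]
    refine Finset.sum_congr rfl fun l _ => Finset.sum_congr rfl fun k _ => ?_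
    rw [hsym]
  calc ∑ l, ∑ k, N l k * (c l * c k)
      ≤ ∑ l, ∑ k, N l k * ((c l ^ 2 + c k ^ 2) / 2) := step
    _ = (∑ l, ∑ k, N l k * c l ^ 2 + ∑ l, ∑ k, N l k * c k ^ 2) / 2 := by
        rw [← Finset.sum_add_distrib, Finset.sum_div]
        refine Finset.sum_congr rfl fun l _ => ?_
        rw [← Finset.sum_add_distrib, Finset.sum_div]
        refine Finset.sum_congr rfl fun k _ => ?_
        ring
    _ = ∑ l, ∑ k, N l k * c l ^ 2 := by rw [swap]; ring

lemma key {d : ℕ} (M : Fin d → Fin d → ℝ) (hM : ∀ k l, 0 ≤ M k l)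
    (hsym : ∀ k l, M k l = M l k) (b : Fin d → ℝ) (hb : ∀ l, 0 < b l)
    (δ : Fin d → ℝ) :
    ∑ l, ∑ k, M l k * (δ l * δ k) ≤ ∑ l, (∑ k, M l k * b k) * (δ l ^ 2 / b l) := by
  have h := key_sym (fun l k => M l k * (b l * b k))
    (fun k l => mul_nonneg (hM k l) (mul_nonneg (hb k).le (hb l).le))
    (fun k l => by rw [hsym]; ring) (fun l => δ l / b l)
  have hL : ∑ l, ∑ k, (fun l k => M l k * (b l * b k)) l k * ((fun l => δ l / b l) l * (fun l => δ l / b l) k)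
      = ∑ l, ∑ k, M l k * (δ l * δ k) := by
    refine Finset.sum_congr rfl fun l _ => Finset.sum_congr rfl fun k _ => ?_
    have h1 := (hb l).ne'
    have h2 := (hb k).ne'
    field_simp
  have hR : ∑ l, ∑ k, (fun l k => M l k * (b l * b k)) l k * ((fun l => δ l / b l) l) ^ 2
      = ∑ l, (∑ k, M l k * b k) * (δ l ^ 2 / b l) := by
    refine Finset.sum_congr rfl fun l _ => ?_
    rw [Finset.sum_mul]
    refine Finset.sum_congr rfl fun k _ => ?_
    have h1 := (hb l).ne'
    field_simp
  rw [hL, hR] at h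
  exact h

theorem stmt10 {m d : ℕ} (A : Matrix (Fin m) (Fin d) ℝ) (hA : ∀ i ℓ, 0 < A i ℓ)
    (x : Fin m → ℝ) (hx : ∀ i, 0 ≤ x i)
    (b : Fin d → ℝ) (hb : ∀ ℓ, 0 < b ℓ)
    (b' : Fin d → ℝ)
    (hb' : ∀ ℓ, b' ℓ = b ℓ * (Aᵀ.mulVec x ℓ) / ((Aᵀ * A).mulVec b ℓ)) :
    Real.sqrt (∑ i, (A.mulVec b' i - x i) ^ 2)
      ≤ Real.sqrt (∑ i, (A.mulVec b i - x i) ^ 2) := by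
  apply Real.sqrt_le_sqrt
  rcases Nat.eq_zero_or_pos m with hm | hm
  · subst hm
    simp
  -- notation
  set M : Matrix (Fin d) (Fin d) ℝ := Aᵀ * A with hMdef
  have hMentry : ∀ k l, M k l = ∑ i, A i k * A i l := by
    intro k l
    simp [hMdef, Matrix.mul_apply, Matrix.transpose_apply]
  have hMpos : ∀ k l, 0 < M k l := by
    intro k l
    rw [hMentry]
    exact Finset.sum_pos (fun i _ => mul_pos (hA i k) (hA i l))
      ⟨⟨0, hm⟩, Finset.mem_univ _⟩
  have hMsym : ∀ k l, M k l = M l k := by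
    intro k l; rw [hMentry, hMentry]
    exact Finset.sum_congr rfl fun i _ => mul_comm _ _
  have hMb : ∀ l, M.mulVec b l = ∑ k, M l k * b k := by
    intro l; simp [Matrix.mulVec, dotProduct]
  have hMbpos : ∀ l, 0 < M.mulVec b l := by
    intro l
    rw [hMb]
    exact Finset.sum_pos (fun k _ => mul_pos (hMpos l k) (hb k)) ⟨l, Finset.mem_univ _⟩
  set g : Fin d → ℝ := fun l => M.mulVec b l - Aᵀ.mulVec x l with hgdef
  set δ : Fin d → ℝ := fun l => b' l - b l with hδdef
  have hδ : ∀ l, δ l = -(b l * g l / M.mulVec b l) := by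
    intro l
    have hne := (hMbpos l).ne'
    simp only [hδdef, hgdef, hb' l]
    field_simp
    ring
  -- decomposition of Ab' - x
  have hdecomp : ∀ i, A.mulVec b' i - x i = (A.mulVec b i - x i) + A.mulVec δ i := by
    intro i
    have : A.mulVec b' i = A.mulVec b i + A.mulVec δ i := by
      simp only [Matrix.mulVec, dotProduct]
      rw [← Finset.sum_add_distrib]
      refine Finset.sum_congr rfl fun l _ => ?_
      simp only [hδdef]
      ring
    rw [this]
    ring
  -- cross term
  have hAg : ∀ l, ∑ i, A i l * (A.mulVec b i - x i) = g l := by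
    intro l
    have h1 : ∑ i, A i l * A.mulVec b i = M.mulVec b l := by
      rw [hMb]
      simp only [Matrix.mulVec, dotProduct, Finset.mul_sum]
      rw [Finset.sum_comm]
      refine Finset.sum_congr rfl fun k _ => ?_
      rw [hMentry, Finset.sum_mul]
      refine Finset.sum_congr rfl fun i _ => ?_
      ring
    have h2 : ∑ i, A i l * x i = Aᵀ.mulVec x l := by
      simp [Matrix.mulVec, dotProduct, Matrix.transpose_apply]
    simp only [hgdef, mul_sub, Finset.sum_sub_distrib, h1, h2]
  have hcross : ∑ i, (A.mulVec b i - x i) * A.mulVec δ i = ∑ l, δ l * g l := by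
    simp only [Matrix.mulVec, dotProduct, Finset.mul_sum]
    rw [Finset.sum_comm]
    refine Finset.sum_congr rfl fun l _ => ?_
    rw [← hAg l, Finset.mul_sum]
    refine Finset.sum_congr rfl fun i _ => ?_
    simp only [Matrix.mulVec, dotProduct]
    ring
  -- quadratic term
  have hquad : ∑ i, (A.mulVec δ i) ^ 2 = ∑ l, ∑ k, M l k * (δ l * δ k) := by
    have : ∀ i, (A.mulVec δ i) ^ 2 = ∑ l, ∑ k, (A i l * δ l) * (A i k * δ k) := by
      intro i
      rw [sq]
      simp only [Matrix.mulVec, dotProduct]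
      rw [Finset.sum_mul_sum]
    rw [Finset.sum_congr rfl fun i _ => this i, Finset.sum_comm]
    refine Finset.sum_congr rfl fun l _ => ?_
    rw [Finset.sum_comm]
    refine Finset.sum_congr rfl fun k _ => ?_
    rw [hMentry, Finset.sum_mul]
    refine Finset.sum_congr rfl fun i _ => ?_
    ring
  -- key inequality
  have hkey := key (fun l k => M l k) (fun k l => (hMpos k l).le) hMsym b hb δ
  have hkey' : ∑ l, ∑ k, M l k * (δ l * δ k) ≤ ∑ l, M.mulVec b l * (δ l ^ 2 / b l) := by
    refine hkey.trans_eq ?_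
    exact Finset.sum_congr rfl fun l _ => by rw [hMb]
  have hfinal : ∑ l, M.mulVec b l * (δ l ^ 2 / b l) + 2 * ∑ l, δ l * g l ≤ 0 := by
    have : ∑ l, M.mulVec b l * (δ l ^ 2 / b l) + 2 * ∑ l, δ l * g l
        = ∑ l, (M.mulVec b l * (δ l ^ 2 / b l) + 2 * (δ l * g l)) := by
      rw [Finset.sum_add_distrib, Finset.mul_sum]
    rw [this]
    apply Finset.sum_nonpos
    intro l _
    rw [hδ l]
    have h1 := (hMbpos l).ne'
    have h2 := (hb l).ne'
    have : M.mulVec b l * ((-(b l * g l / M.mulVec b l)) ^ 2 / b l)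
        + 2 * (-(b l * g l / M.mulVec b l) * g l)
        = -(b l * g l ^ 2 / M.mulVec b l) := by
      field_simp
      ring
    rw [this]
    apply neg_nonpos_of_nonneg
    exact div_nonneg (mul_nonneg (hb l).le (sq_nonneg _)) (hMbpos l).le
  -- put it all together
  have expand : ∑ i, (A.mulVec b' i - x i) ^ 2
      = ∑ i, (A.mulVec b i - x i) ^ 2
        + (2 * ∑ l, δ l * g l + ∑ l, ∑ k, M l k * (δ l * δ k)) := by
    rw [← hcross, ← hquad]
    rw [Finset.sum_congr rfl fun i _ => by rw [hdecomp i]]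
    rw [Finset.mul_sum, ← Finset.sum_add_distrib, ← Finset.sum_add_distrib]
    refine Finset.sum_congr rfl fun i _ => ?_
    ring
  rw [expand]
  linarith [hkey', hfinal]
end

section
/- Consider the second-order cone Euclidean Jordan algebra on ℝ × ℝ^n with Jordan product (p, q) ∘ (r, s) = (pr + ⟨q, s⟩, ps + rq) and trace inner product ⟨(p,q), (r,s)⟩ = 2(pr + ⟨q,s⟩). Let a = (t, x) with x ≠ 0 and ‖x‖ < t, and define c = (c_0, c_1) by c_0 = (√(t+‖x‖) + √(t−‖x‖))/2 and c_1 = ((√(t+‖x‖) − √(t−‖x‖))/(2‖x‖)) x, so that c ∘ c = a. Then for every b ∈ ℝ × ℝ^n one has ⟨a, b⟩^2 ≤ 2t · ⟨b, 2 c ∘ (c ∘ b) − a ∘ b⟩. (Lemma 3 of the paper, ⟨a,b⟩^2 ≤ tr(a) ⟨b, P(a^{1/2}) b⟩, specialized to the second-order cone, where P(c)b = 2c∘(c∘b) − (c∘c)∘b and tr(t,x) = 2t.) -/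
open scoped RealInnerProductSpace

/- The Jordan product of the second-order cone Euclidean Jordan algebra on `ℝ × ℝⁿ`:
`(p, q) ∘ (r, s) = (p r + ⟨q, s⟩, p s + r q)`. -/
noncomputable def socMul {n : ℕ} (p q : ℝ × EuclideanSpace ℝ (Fin n)) :
    ℝ × EuclideanSpace ℝ (Fin n) :=
  (p.1 * q.1 + ⟪p.2, q.2⟫, p.1 • q.2 + q.1 • p.2)

/- The trace inner product `⟨(p,q),(r,s)⟩ = 2 (p r + ⟨q, s⟩)` of the second-order cone
Euclidean Jordan algebra. -/
noncomputable def socInner {n : ℕ} (p q : ℝ × EuclideanSpace ℝ (Fin n)) : ℝ :=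
  2 * (p.1 * q.1 + ⟪p.2, q.2⟫)

private lemma stmt14_aux (t s d c₀ k β r Y : ℝ) (ht : 0 < t) (hs0 : 0 < s) (hd0 : 0 ≤ d)
    (hd2 : d ^ 2 = t ^ 2 - s ^ 2)
    (h1 : c₀ ^ 2 = (t + d) / 2) (h2 : 2 * c₀ * k = 1) (h3 : k ^ 2 * s ^ 2 = (t - d) / 2)
    (hcs : r ^ 2 ≤ s ^ 2 * Y ^ 2) :
    (2 * (t * β + r)) ^ 2 ≤
      2 * t *
        (2 *
          (β * (2 * (c₀ * (c₀ * β + k * r) + (c₀ * (k * r) + β * (k ^ 2 * s ^ 2)))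
              - (t * β + r))
            + (2 * (c₀ * (c₀ * Y ^ 2 + β * (k * r)) + (c₀ * β + k * r) * (k * r))
              - (t * Y ^ 2 + β * r)))) := by
  have e1 : t * (c₀ ^ 2 * β ^ 2) = t * ((t + d) / 2 * β ^ 2) := by
    linear_combination t * β ^ 2 * h1
  have e2 : t * (c₀ ^ 2 * Y ^ 2) = t * ((t + d) / 2 * Y ^ 2) := by
    linear_combination t * Y ^ 2 * h1
  have e3 : t * (c₀ * k * (β * r)) = t * (β * r / 2) := by
    linear_combination t * β * r / 2 * h2
  have e4 : t * (k ^ 2 * s ^ 2 * β ^ 2) = t * ((t - d) / 2 * β ^ 2) := by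
    linear_combination t * β ^ 2 * h3
  have e5 : t * (s ^ 2 * (k ^ 2 * r ^ 2)) = t * ((t - d) / 2 * r ^ 2) := by
    linear_combination t * r ^ 2 * h3
  have hd2' : d ^ 2 * r ^ 2 = (t ^ 2 - s ^ 2) * r ^ 2 := by
    linear_combination r ^ 2 * hd2
  have h6 : 0 ≤ t * (s ^ 2 * Y ^ 2 - r ^ 2) := mul_nonneg ht.le (by linarith)
  have h7 : 0 ≤ d * r ^ 2 := mul_nonneg hd0 (sq_nonneg r)
  have f1 : 0 ≤ d * (t * (s ^ 2 * Y ^ 2 - r ^ 2) + d * r ^ 2) := by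
    calc (0:ℝ) ≤ d * (t * (s ^ 2 * Y ^ 2 - r ^ 2)) + d * (d * r ^ 2) :=
          add_nonneg (mul_nonneg hd0 h6) (mul_nonneg hd0 h7)
      _ = d * (t * (s ^ 2 * Y ^ 2 - r ^ 2) + d * r ^ 2) := by ring
  have g : 0 ≤ s ^ 2 * (t * d * Y ^ 2 + 2 * t * (k ^ 2 * r ^ 2) - r ^ 2) := by
    linarith [f1, e5, hd2']
  have final : 0 ≤ t * d * Y ^ 2 + 2 * t * (k ^ 2 * r ^ 2) - r ^ 2 :=
    (mul_nonneg_iff_of_pos_left (pow_pos hs0 2)).mp g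
  linarith [e1, e2, e3, e4, final]

theorem stmt14 {n : ℕ} (t : ℝ) (x : EuclideanSpace ℝ (Fin n)) (hx : x ≠ 0) (hxt : ‖x‖ < t)
    (c₀ : ℝ) (c₁ : EuclideanSpace ℝ (Fin n))
    (hc₀ : c₀ = (Real.sqrt (t + ‖x‖) + Real.sqrt (t - ‖x‖)) / 2)
    (hc₁ : c₁ = ((Real.sqrt (t + ‖x‖) - Real.sqrt (t - ‖x‖)) / (2 * ‖x‖)) • x) :
    ∀ b : ℝ × EuclideanSpace ℝ (Fin n),
      (socInner (t, x) b) ^ 2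
        ≤ 2 * t * socInner b
            ((2 : ℝ) • socMul (c₀, c₁) (socMul (c₀, c₁) b) - socMul (t, x) b) := by
  set s := ‖x‖ with hs
  have hs0 : 0 < s := norm_pos_iff.2 hx
  have ht : 0 < t := lt_of_le_of_lt (norm_nonneg x) hxt
  set k := (Real.sqrt (t + s) - Real.sqrt (t - s)) / (2 * s) with hk
  set d := Real.sqrt (t ^ 2 - s ^ 2) with hd
  have hts1 : (0:ℝ) ≤ t + s := by positivity
  have hts2 : (0:ℝ) ≤ t - s := by linarith
  have hpq : Real.sqrt (t + s) * Real.sqrt (t - s) = d := by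
    rw [← Real.sqrt_mul hts1, hd]; ring_nf
  have hp2 : Real.sqrt (t + s) ^ 2 = t + s := Real.sq_sqrt hts1
  have hq2 : Real.sqrt (t - s) ^ 2 = t - s := Real.sq_sqrt hts2
  have hd0 : 0 ≤ d := Real.sqrt_nonneg _
  have hd2 : d ^ 2 = t ^ 2 - s ^ 2 := Real.sq_sqrt (by nlinarith)
  have h1 : c₀ ^ 2 = (t + d) / 2 := by
    rw [hc₀]; field_simp; linear_combination hp2 + hq2 + 2*hpq
  have h2 : 2 * c₀ * k = 1 := by
    rw [hc₀, hk]; field_simp; linear_combination hp2 - hq2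
  have h3 : k ^ 2 * s ^ 2 = (t - d) / 2 := by
    rw [hk]; field_simp; linear_combination hp2 + hq2 - 2*hpq
  rintro ⟨β, y⟩
  rw [hc₁]
  simp only [socMul, socInner, Prod.smul_fst, Prod.smul_snd, Prod.fst_sub, Prod.snd_sub,
    smul_eq_mul, inner_add_left, inner_add_right, inner_sub_left, inner_sub_right,
    real_inner_smul_left, real_inner_smul_right, real_inner_self_eq_norm_sq,
    real_inner_comm x y, norm_smul, Real.norm_eq_abs, mul_pow, sq_abs]
  set r : ℝ := inner ℝ x y with hr
  set Y := ‖y‖ with hY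
  have hcs : r ^ 2 ≤ s ^ 2 * Y ^ 2 := by
    have h := abs_real_inner_le_norm x y
    nlinarith [abs_nonneg (inner ℝ x y : ℝ), sq_abs (inner ℝ x y : ℝ), norm_nonneg y]
  rw [← hs]
  have H := stmt14_aux t s d c₀ k β r Y ht hs0 hd0 hd2 h1 h2 h3 hcs
  linarith [H]
end
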